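/- If the preferences are positive (f_p(q) > 0 for all distinct agents p, q) and the seat graph has at least one isolated vertex and at least one edge, then no arrangement is envy-free. -/

import Mathlib

open scoped Classical

noncomputable section

namespace SeatArrangement

variable {P V : Type*}

/-- The utility of agent `p` under arrangement `π`:
the sum, over the seat-graph neighbors `v` of `π p`, of `p`'s preference for the agent seated
at `v`. -/
def utility [Fintype V] (G : SimpleGraph V) (f : P → P → ℝ) (π : P ≃ V) (p : P) : ℝ :=
  ∑ v : V, if G.Adj (π p) v then f p (π.symm v) else 0

/-- The social welfare of an arrangement: the sum of the utilities of all agents. -/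
def sw [Fintype P] [Fintype V] (G : SimpleGraph V) (f : P → P → ℝ) (π : P ≃ V) : ℝ :=
  ∑ p : P, utility G f π p

/-- The `(p,q)`-swap arrangement of `π`. -/
def swapArr (π : P ≃ V) (p q : P) : P ≃ V := (Equiv.swap p q).trans π

/-- `{p, q}` is a blocking pair for `π`: both agents strictly improve by swapping seats. -/
def blocking [Fintype V] (G : SimpleGraph V) (f : P → P → ℝ) (π : P ≃ V) (p q : P) : Prop :=
  p ≠ q ∧ utility G f π p < utility G f (swapArr π p q) p
        ∧ utility G f π q < utility G f (swapArr π p q) q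

/-- An arrangement is stable if it has no blocking pair. -/
def stable [Fintype V] (G : SimpleGraph V) (f : P → P → ℝ) (π : P ≃ V) : Prop :=
  ∀ p q : P, ¬ blocking G f π p q

/-- An arrangement is envy-free if no agent would strictly improve by taking
another agent's seat (via a swap). -/
def envyFree [Fintype V] (G : SimpleGraph V) (f : P → P → ℝ) (π : P ≃ V) : Prop :=
  ∀ p q : P, p ≠ q → utility G f (swapArr π p q) p ≤ utility G f π p

/-- The least utility of an agent under `π` (for a finite nonempty set of agents, the
infimum of the range of utilities is the minimum utility). -/
def minUtil [Fintype V] (G : SimpleGraph V) (f : P → P → ℝ) (π : P ≃ V) : ℝ :=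
  sInf (Set.range (utility G f π))

/-- A maximin arrangement maximizes the least utility of an agent. -/
def maximin [Fintype V] (G : SimpleGraph V) (f : P → P → ℝ) (πf : P ≃ V) : Prop :=
  ∀ π : P ≃ V, minUtil G f π ≤ minUtil G f πf

/-- A maximum arrangement maximizes the social welfare. -/
def maximum [Fintype P] [Fintype V] (G : SimpleGraph V) (f : P → P → ℝ) (πm : P ≃ V) : Prop :=
  ∀ π : P ≃ V, sw G f π ≤ sw G f πm

end SeatArrangement

open SeatArrangement

/-- if all preferences are positive and the seat graph has at least one
isolated vertex and at least one edge, then no arrangement is envy-free. -/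
theorem no_envyFree_of_positive_isolated_edge {P V : Type*} [Fintype P] [Fintype V]
    (G : SimpleGraph V) (f : P → P → ℝ)
    (hpos : ∀ p q : P, p ≠ q → 0 < f p q)
    (hiso : ∃ v : V, ∀ w : V, ¬ G.Adj v w)
    (hedge : ∃ u w : V, G.Adj u w) :
    ∀ π : P ≃ V, ¬ envyFree G f π := by
  intro π hEF
  obtain ⟨v, hv⟩ := hiso
  obtain ⟨u, w, huw⟩ := hedge
  set p0 := π.symm v with hp0
  set q := π.symm u with hq
  have hπp0 : π p0 = v := π.apply_symm_apply v
  have hπq : π q = u := π.apply_symm_apply u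
  have hvu : v ≠ u := by
    intro h; exact hv w (h ▸ huw)
  have hpq : p0 ≠ q := by
    intro h; apply hvu; rw [← hπp0, ← hπq, h]
  set σ := swapArr π p0 q with hσ
  have hσp0 : σ p0 = u := by
    simp [hσ, swapArr, Equiv.swap_apply_left, hπq]
  have hU0 : utility G f π p0 = 0 := by
    unfold utility
    rw [hπp0]
    exact Finset.sum_eq_zero (fun x _ => by simp [hv x])
  have hUpos : 0 < utility G f σ p0 := by
    unfold utility
    rw [hσp0]
    apply Finset.sum_pos'
    · intro x _
      by_cases h : G.Adj u x
      · simp only [h, if_true]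
        apply le_of_lt
        apply hpos
        intro heq
        have : σ p0 = x := by rw [heq, σ.apply_symm_apply]
        rw [hσp0] at this
        exact G.loopless.irrefl u (this ▸ h)
      · simp [h]
    · refine ⟨w, Finset.mem_univ w, ?_⟩
      simp only [huw, if_true]
      apply hpos
      intro heq
      have : σ p0 = w := by rw [heq, σ.apply_symm_apply]
      rw [hσp0] at this
      exact G.loopless.irrefl u (this ▸ huw)
  have := hEF p0 q hpq
  rw [← hσ] at this
  rw [hU0] at this
  exact absurd (lt_of_lt_of_le hUpos this) (lt_irrefl 0)
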